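/- Let G' = Π_V(G) be the projection of a GMWf G satisfying the axioms' visibility and non-recursivity assumptions, let t_V be an artifact that is a prefix of at least one local target artifact of G', and let t_V^maj be obtained from t_V by developing some of its unlocked buds in accordance with the productions of G'. Then t_V ≤ t_V^maj, and t_V^maj is a prefix of at least one local target artifact of G' (i.e. the set of local target artifacts admitting t_V^maj as a prefix is a nonempty subset of those admitting t_V as a prefix). -/

import Mathlib

/-!
Formalization of LSAWfP concepts: GMWf, artifacts, views, projections.
-/

open scoped Classical

namespace LSAWfP

/-- Scheduling annotations: sequential (`⨟`) or parallel (`∥`). -/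
inductive Ann : Type
  | seq : Ann
  | par : Ann
deriving DecidableEq

/-- Grammatical symbols: base symbols (sorts of the process) together with
(re)structuring symbols, canonically named by the local scheduling
(annotation and list of son symbols) they induce. -/
inductive Sym (α : Type) : Type
  | base : α → Sym α
  | struct : Ann → List (Sym α) → Sym α

/-- A (re)structuring symbol. -/
def Sym.isStruct {α : Type} : Sym α → Prop
  | .base _ => False
  | .struct _ _ => True

/-- A production `X₀ → X₁ ⨟ … ⨟ Xₙ` (if `ann = .seq`) or
`X₀ → X₁ ∥ … ∥ Xₙ` (if `ann = .par`); `rhs = []` encodes `X₀ → ε`. -/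
structure Production (α : Type) : Type where
  lhs : Sym α
  ann : Ann
  rhs : List (Sym α)

/-- An artifact: a finite ordered tree whose nodes are labelled by grammatical
symbols, each hierarchical decomposition being annotated sequential or
parallel; `bud s u` is a bud leaf of type `s`, unlocked iff `u = true`. -/
inductive Tree (α : Type) : Type
  | node : Sym α → Ann → List (Tree α) → Tree α
  | bud : Sym α → Bool → Tree α

namespace Tree

/-- The symbol labelling the root of an artifact. -/
def rootSym {α : Type} : Tree α → Sym α
  | .node s _ _ => s
  | .bud s _ => s

/-- The annotation of the root decomposition of an artifact. -/
def rootAnn {α : Type} : Tree α → Ann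
  | .node _ a _ => a
  | .bud _ _ => .seq

end Tree

/-- A grammatical model of workflow (GMWf): symbols, productions, axioms. -/
structure PreGMWf (α : Type) : Type where
  symbols : Set (Sym α)
  prods : Set (Production α)
  axioms : Set (Sym α)

/-- `G` is a genuine GMWf: finite sets of symbols and productions, axioms among
the symbols, and productions built on the symbols. -/
def IsGMWf {α : Type} (G : PreGMWf α) : Prop :=
  G.symbols.Finite ∧ G.prods.Finite ∧ G.axioms ⊆ G.symbols ∧
    ∀ p ∈ G.prods, p.lhs ∈ G.symbols ∧ ∀ x ∈ p.rhs, x ∈ G.symbols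

/-- Local conformance of an artifact (possibly containing buds) to a GMWf:
every hierarchical decomposition is obtained from a production of matching
form, and buds are typed by symbols of the model. -/
inductive LocalOK {α : Type} (G : PreGMWf α) : Tree α → Prop
  | bud {s : Sym α} {u : Bool} : s ∈ G.symbols → LocalOK G (.bud s u)
  | node {s : Sym α} {a : Ann} {ts : List (Tree α)} :
      (⟨s, a, ts.map Tree.rootSym⟩ : Production α) ∈ G.prods →
      (∀ t ∈ ts, LocalOK G t) → LocalOK G (.node s a ts)

/-- An artifact `t` conforms to `G` (written `t ∴ G`): its root is labelled by
an axiom and every hierarchical decomposition comes from a production. -/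
def Conforms {α : Type} (G : PreGMWf α) (t : Tree α) : Prop :=
  t.rootSym ∈ G.axioms ∧ LocalOK G t

/-- Bud-free artifacts generated by the productions of `G`. -/
inductive Gen {α : Type} (G : PreGMWf α) : Tree α → Prop
  | node {s : Sym α} {a : Ann} {ts : List (Tree α)} :
      (⟨s, a, ts.map Tree.rootSym⟩ : Production α) ∈ G.prods →
      (∀ t ∈ ts, Gen G t) → Gen G (.node s a ts)

/-- A bud-free artifact. -/
inductive BudFree {α : Type} : Tree α → Prop
  | node {s : Sym α} {a : Ann} {ts : List (Tree α)} :
      (∀ t ∈ ts, BudFree t) → BudFree (.node s a ts)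

/-- `arts G`: the set of target artifacts of `G`, i.e. the bud-free artifacts
generated from an axiom of `G` by its productions. -/
def arts {α : Type} (G : PreGMWf α) : Set (Tree α) :=
  {t | t.rootSym ∈ G.axioms ∧ Gen G t}

/-- One derivation step between symbols: `s'` occurs in the right-hand side of
a production of lhs `s`. -/
def StepSym {α : Type} (G : PreGMWf α) (s s' : Sym α) : Prop :=
  ∃ p ∈ G.prods, p.lhs = s ∧ s' ∈ p.rhs

/-- `G` is non-recursive: no symbol can derive a tree in which it reappears. -/
def NonRecursive {α : Type} (G : PreGMWf α) : Prop :=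
  ∀ s : Sym α, ¬ Relation.TransGen (StepSym G) s s

/-- The artifact projection `π_V(t)` of an artifact according to a view `V`:
visible nodes are kept, invisible nodes are deleted with their projected
sub-artifacts promoted, and fresh (re)structuring symbols are inserted
whenever the projected sons of a node mix scheduling types incompatible with
a single production form; in general it returns a forest. -/
noncomputable def proj {α : Type} (V : Set (Sym α)) : Tree α → List (Tree α)
  | .bud s u => if s ∈ V then [.bud s u] else []
  | .node s a ts =>
      let pieces : List (List (Tree α) ⊕ Tree α) :=
        ts.attach.map (fun x =>
          let ps := proj V x.1
          if x.1.rootAnn = a ∨ ps.length ≤ 1 then .inl ps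
          else .inr (.node (.struct x.1.rootAnn (ps.map Tree.rootSym)) x.1.rootAnn ps))
      let flat : List (Tree α) := pieces.flatMap (fun p => p.elim id (fun w => [w]))
      if s ∈ V then
        match flat, pieces.any Sum.isRight with
        | [Tree.node _ a1 cs], true => [Tree.node s a1 cs]
        | _, _ => [Tree.node s a flat]
      else flat
termination_by t => sizeOf t
decreasing_by
  all_goals (simp_wf; have := List.sizeOf_lt_of_mem x.2; omega)

/-- All productions used in the hierarchical decompositions of an artifact. -/
def treeProds {α : Type} : Tree α → List (Production α)
  | .bud _ _ => []
  | .node s a ts =>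
      ⟨s, a, ts.map Tree.rootSym⟩ :: ts.attach.flatMap (fun x => treeProds x.1)
termination_by t => sizeOf t
decreasing_by
  all_goals (simp_wf; have := List.sizeOf_lt_of_mem x.2; omega)

/-- All symbols occurring in an artifact. -/
def treeSyms {α : Type} : Tree α → List (Sym α)
  | .bud s _ => [s]
  | .node s _ ts => s :: ts.attach.flatMap (fun x => treeSyms x.1)
termination_by t => sizeOf t
decreasing_by
  all_goals (simp_wf; have := List.sizeOf_lt_of_mem x.2; omega)

/-- The local target artifacts for the view `V`: projections of the target
artifacts of `G`. -/
noncomputable def localArts {α : Type} (V : Set (Sym α)) (G : PreGMWf α) : Set (Tree α) :=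
  {t' | ∃ t ∈ arts G, t' ∈ proj V t}

/-- The retained (re)structuring symbols of the projection of `G` along `V`. -/
noncomputable def structSymsOf {α : Type} (V : Set (Sym α)) (G : PreGMWf α) : Set (Sym α) :=
  {s | (∃ t' ∈ localArts V G, s ∈ treeSyms t') ∧ s.isStruct}

/-- The GMWf projection `Π_V(G)`: its symbols are `V` together with the
retained restructuring symbols, its productions are those occurring in the
local target artifacts, and its axioms are the axioms of `G`. -/
noncomputable def projG {α : Type} (V : Set (Sym α)) (G : PreGMWf α) : PreGMWf α where
  symbols := V ∪ structSymsOf V G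
  prods := {p | ∃ t' ∈ localArts V G, p ∈ treeProds t'}
  axioms := G.axioms

/-- The prefix relation on artifacts: `t_a ≤ t_b` iff their roots carry the
same symbol and either the root of `t_a` is a bud, or the decompositions have
the same annotation and the sons are pairwise prefixes. -/
inductive TPrefix {α : Type} : Tree α → Tree α → Prop
  | bud {s : Sym α} {u : Bool} {t : Tree α} : t.rootSym = s → TPrefix (.bud s u) t
  | node {s : Sym α} {a : Ann} {ts ts' : List (Tree α)} :
      List.Forall₂ TPrefix ts ts' → TPrefix (.node s a ts) (.node s a ts')

/-- `Develop G t t'`: `t'` is obtained from `t` by developing some of its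
unlocked buds in accordance with the productions of `G` (each developed bud of
type `X` is replaced by a tree rooted at `X` built from the productions of
`G`, whose leaves may again be buds). -/
inductive Develop {α : Type} (G : PreGMWf α) : Tree α → Tree α → Prop
  | bud_keep {s : Sym α} {u : Bool} : Develop G (.bud s u) (.bud s u)
  | bud_dev {s : Sym α} {t : Tree α} :
      t.rootSym = s → LocalOK G t → Develop G (.bud s true) t
  | node {s : Sym α} {a : Ann} {ts ts' : List (Tree α)} :
      List.Forall₂ (Develop G) ts ts' → Develop G (.node s a ts) (.node s a ts')

/-- The accreditation of an actor: its sets of symbols readable (its view),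
writable and executable. -/
structure Accreditation (α : Type) : Type where
  read : Set (Sym α)
  write : Set (Sym α)
  exec : Set (Sym α)

/-- A grammatical model of administrative workflow process: a GMWf together
with the list of accreditations of its actors. -/
structure GMAWfP (α : Type) : Type where
  gmwf : PreGMWf α
  actors : List (Accreditation α)

/-- The axioms' visibility assumption: every axiom of the GMWf belongs to
every actor's view. -/
def AxiomsVisible {α : Type} (W : GMAWfP α) : Prop :=
  ∀ acc ∈ W.actors, W.gmwf.axioms ⊆ acc.read

/-- Well-formedness of the accreditations: each view is a set of symbols of
the model and each actor accredited in writing on a sort is accredited in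
reading on it. -/
def ActorsWf {α : Type} (W : GMAWfP α) : Prop :=
  ∀ acc ∈ W.actors, acc.read ⊆ W.gmwf.symbols ∧ acc.write ⊆ acc.read

/-! ### Auxiliary lemmas -/

section Aux

variable {α : Type}

theorem TPrefix.rootSym_eq {a b : Tree α} (h : TPrefix a b) :
    a.rootSym = b.rootSym := by
  cases h with
  | bud h => exact h.symm
  | node _ => rfl

theorem Develop.rootSym_eq {G : PreGMWf α} {a b : Tree α} (h : Develop G a b) :
    a.rootSym = b.rootSym := by
  cases h with
  | bud_keep => rfl
  | bud_dev h _ => exact h.symm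
  | node _ => rfl

theorem forall₂_mem_imp {β γ : Type*} {R S : β → γ → Prop} :
    ∀ {l1 : List β} {l2 : List γ}, List.Forall₂ R l1 l2 →
      (∀ a ∈ l1, ∀ b, R a b → S a b) → List.Forall₂ S l1 l2 := by
  intro l1 l2 h
  induction h with
  | nil => intro _; exact .nil
  | cons hr _ ih =>
      intro f
      exact .cons (f _ (by simp) _ hr) (ih fun a ha b hb => f a (by simp [ha]) b hb)

theorem forall₂_trans_mem {β : Type*} {R : β → β → Prop} :
    ∀ {l1 l2 l3 : List β}, List.Forall₂ R l1 l2 → List.Forall₂ R l2 l3 →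
      (∀ a ∈ l1, ∀ b c, R a b → R b c → R a c) → List.Forall₂ R l1 l3 := by
  intro l1 l2 l3 h12
  induction h12 generalizing l3 with
  | nil => intro h23 _; cases h23; exact .nil
  | cons hr _ ih =>
      intro h23 f
      cases h23 with
      | cons hr2 ht2 =>
          exact .cons (f _ (by simp) _ _ hr hr2)
            (ih ht2 fun a ha b c => f a (by simp [ha]) b c)

theorem forall₂_mem_right {β γ : Type*} {R : β → γ → Prop} :
    ∀ {l1 : List β} {l2 : List γ}, List.Forall₂ R l1 l2 →
      ∀ b ∈ l2, ∃ a ∈ l1, R a b := by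
  intro l1 l2 h
  induction h with
  | nil => simp
  | cons hr _ ih =>
      intro b hb
      rcases hb with _ | hb
      · exact ⟨_, by simp, hr⟩
      · obtain ⟨a, ha, hab⟩ := ih _ (by assumption)
        exact ⟨a, by simp [ha], hab⟩

theorem map_eq_of_forall₂ {β γ δ : Type*} {R : β → γ → Prop} {f : β → δ} {g : γ → δ} :
    ∀ {l1 : List β} {l2 : List γ}, List.Forall₂ R l1 l2 →
      (∀ a b, R a b → g b = f a) → l2.map g = l1.map f := by
  intro l1 l2 h
  induction h with
  | nil => simp
  | cons hr _ ih => intro hf; simp [hf _ _ hr, ih hf]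

theorem choose_forall₂ {β γ : Type*} {R : β → γ → Prop} :
    ∀ {l : List β}, (∀ x ∈ l, ∃ y, R x y) → ∃ l', List.Forall₂ R l l' := by
  intro l
  induction l with
  | nil => intro _; exact ⟨[], .nil⟩
  | cons a l ih =>
      intro h
      obtain ⟨y, hy⟩ := h a (by simp)
      obtain ⟨l', hl'⟩ := ih fun x hx => h x (by simp [hx])
      exact ⟨y :: l', .cons hy hl'⟩

theorem develop_tprefix {G : PreGMWf α} : ∀ (a b : Tree α), Develop G a b → TPrefix a b := by
  intro a b h
  cases h with
  | bud_keep => exact .bud rfl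
  | bud_dev h _ => exact .bud h
  | node hf => exact .node (forall₂_mem_imp hf fun x hx y hy => develop_tprefix x y hy)
termination_by a => sizeOf a
decreasing_by
  all_goals simp_wf
  all_goals try subst_vars
  all_goals (have := List.sizeOf_lt_of_mem hx)
  all_goals try simp only [Tree.node.sizeOf_spec] at *
  all_goals omega

theorem tprefix_trans : ∀ (a b c : Tree α), TPrefix a b → TPrefix b c → TPrefix a c := by
  intro a b c h1 h2
  cases h1 with
  | bud h => exact .bud (by rw [← h2.rootSym_eq]; exact h)
  | node hf =>
      cases h2 with
      | node hf2 =>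
          exact .node (forall₂_trans_mem hf hf2 fun x hx y z hy hz => tprefix_trans x y z hy hz)
termination_by a => sizeOf a
decreasing_by
  all_goals simp_wf
  all_goals try subst_vars
  all_goals (have := List.sizeOf_lt_of_mem hx)
  all_goals try simp only [Tree.node.sizeOf_spec] at *
  all_goals omega

theorem treeProds_self {s : Sym α} {a : Ann} {ts : List (Tree α)} :
    (⟨s, a, ts.map Tree.rootSym⟩ : Production α) ∈ treeProds (.node s a ts) := by
  rw [treeProds]; simp

theorem treeProds_son {s : Sym α} {a : Ann} {ts : List (Tree α)} {x : Tree α}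
    (hx : x ∈ ts) {p : Production α} (hp : p ∈ treeProds x) :
    p ∈ treeProds (.node s a ts) := by
  rw [treeProds]
  simp only [List.mem_cons, List.mem_flatMap, List.mem_attach]
  exact Or.inr ⟨⟨x, hx⟩, trivial, hp⟩

theorem rootSym_mem_treeSyms (t : Tree α) : t.rootSym ∈ treeSyms t := by
  cases t <;> (rw [treeSyms]; simp [Tree.rootSym])

theorem treeSyms_son {s : Sym α} {a : Ann} {ts : List (Tree α)} {x : Tree α}
    (hx : x ∈ ts) {y : Sym α} (hy : y ∈ treeSyms x) :
    y ∈ treeSyms (.node s a ts) := by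
  rw [treeSyms]
  simp only [List.mem_cons, List.mem_flatMap, List.mem_attach]
  exact Or.inr ⟨⟨x, hx⟩, trivial, hy⟩

theorem rhs_mem_treeSyms : ∀ (t : Tree α) (p : Production α), p ∈ treeProds t →
    ∀ s ∈ p.rhs, s ∈ treeSyms t := by
  intro t p hp s hs
  cases t with
  | bud s' u => rw [treeProds] at hp; simp at hp
  | node s' a ts =>
      rw [treeProds] at hp
      simp only [List.mem_cons, List.mem_flatMap, List.mem_attach] at hp
      rcases hp with rfl | ⟨⟨x, hx⟩, -, hp⟩
      · simp only [List.mem_map] at hs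
        obtain ⟨x, hx, rfl⟩ := hs
        exact treeSyms_son hx (rootSym_mem_treeSyms x)
      · exact treeSyms_son hx (rhs_mem_treeSyms x p hp s hs)
termination_by t => sizeOf t
decreasing_by
  all_goals simp_wf
  all_goals try subst_vars
  all_goals (have := List.sizeOf_lt_of_mem hx)
  all_goals try simp only [Tree.node.sizeOf_spec] at *
  all_goals omega

theorem gen_budfree {P : PreGMWf α} : ∀ (t : Tree α), Gen P t → BudFree t := by
  intro t h
  cases h with
  | node hp hts =>
      exact .node fun x hx => gen_budfree x (hts x hx)
termination_by t => sizeOf t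
decreasing_by
  all_goals simp_wf
  all_goals try subst_vars
  all_goals (have := List.sizeOf_lt_of_mem hx)
  all_goals try simp only [Tree.node.sizeOf_spec] at *
  all_goals omega

theorem gen_of_budfree {P : PreGMWf α} : ∀ (t : Tree α), BudFree t →
    (∀ p ∈ treeProds t, p ∈ P.prods) → Gen P t := by
  intro t hb hp
  cases t with
  | bud s u => cases hb
  | node s a ts =>
      cases hb with
      | node hbs =>
          exact Gen.node (hp _ treeProds_self)
            (fun x hx => gen_of_budfree x (hbs x hx) fun q hq => hp q (treeProds_son hx hq))
termination_by t => sizeOf t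
decreasing_by
  all_goals simp_wf
  all_goals try subst_vars
  all_goals (have := List.sizeOf_lt_of_mem hx)
  all_goals try simp only [Tree.node.sizeOf_spec] at *
  all_goals omega

theorem gen_subtree {P : PreGMWf α} : ∀ (t : Tree α), Gen P t →
    ∀ s ∈ treeSyms t, ∃ t', Gen P t' ∧ t'.rootSym = s := by
  intro t hg s hs
  cases hg with
  | @node s' a ts hp hts =>
      rw [treeSyms] at hs
      simp only [List.mem_cons, List.mem_flatMap, List.mem_attach] at hs
      rcases hs with rfl | ⟨⟨x, hx⟩, -, hs⟩
      · exact ⟨_, Gen.node hp hts, rfl⟩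
      · exact gen_subtree x (hts x hx) s hs
termination_by t => sizeOf t
decreasing_by
  all_goals simp_wf
  all_goals try subst_vars
  all_goals (have := List.sizeOf_lt_of_mem hx)
  all_goals try simp only [Tree.node.sizeOf_spec] at *
  all_goals omega

theorem budfree_proj {V : Set (Sym α)} : ∀ (t : Tree α), BudFree t →
    ∀ u ∈ proj V t, BudFree u := by
  intro t hb u hu
  cases t with
  | bud s w => cases hb
  | node s a ts =>
      cases hb with
      | node hbs =>
      rw [proj] at hu
      simp only at hu
      have hflat : ∀ w ∈ (List.map
            (fun (x : {x // x ∈ ts}) =>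
              if (↑x : Tree α).rootAnn = a ∨ (proj V ↑x).length ≤ 1 then Sum.inl (proj V ↑x)
              else
                Sum.inr
                  (Tree.node (Sym.struct (↑x : Tree α).rootAnn (List.map Tree.rootSym (proj V ↑x)))
                    (↑x : Tree α).rootAnn (proj V ↑x)))
            ts.attach).flatMap (fun p => Sum.elim id (fun w => [w]) p), BudFree w := by
        intro w hw
        simp only [List.mem_flatMap, List.mem_map, List.mem_attach] at hw
        obtain ⟨piece, ⟨x, -, rfl⟩, hw⟩ := hw
        have hIH : ∀ v ∈ proj V (↑x : Tree α), BudFree v := budfree_proj ↑x (hbs ↑x x.2)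
        by_cases hcond : (↑x : Tree α).rootAnn = a ∨ (proj V ↑x).length ≤ 1
        · rw [if_pos hcond] at hw
          exact hIH w hw
        · rw [if_neg hcond] at hw
          simp only [Sum.elim_inr, List.mem_singleton] at hw
          subst hw
          exact .node hIH
      revert hu
      split
      · intro hu
        split at hu
        · rename_i a' a1 cs heqflat hany
          rcases List.mem_singleton.mp hu with rfl
          have hbf := hflat (Tree.node a' a1 cs) (by rw [heqflat]; simp)
          cases hbf with
          | node hcs => exact .node hcs
        · rcases List.mem_singleton.mp hu with rfl
          exact .node hflat
      · intro hu
        exact hflat u hu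
termination_by t => sizeOf t
decreasing_by
  all_goals simp_wf
  all_goals try subst_vars
  all_goals (have := List.sizeOf_lt_of_mem x.2)
  all_goals try simp only [Tree.node.sizeOf_spec] at *
  all_goals omega

end Aux

section Aux2

variable {α : Type}

/-- Completion: a locally conforming artifact whose root (if it is a bud) is
productive can be extended to a generated (bud-free) artifact. -/
theorem complete_localOK {G' : PreGMWf α}
    (hrhs : ∀ p ∈ G'.prods, ∀ s ∈ p.rhs, ∃ tb, Gen G' tb ∧ tb.rootSym = s) :
    ∀ (t : Tree α), LocalOK G' t →
      (∀ s u, t = .bud s u → ∃ tb, Gen G' tb ∧ tb.rootSym = s) →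
      ∃ t', Gen G' t' ∧ TPrefix t t' ∧ t'.rootSym = t.rootSym := by
  intro t hok hbud
  cases hok with
  | @bud s u hs =>
      obtain ⟨tb, hg, hr⟩ := hbud s u rfl
      exact ⟨tb, hg, .bud hr, hr⟩
  | @node s a ts hp hts =>
      have hchoice : ∀ x ∈ ts, ∃ y, Gen G' y ∧ TPrefix x y ∧ y.rootSym = x.rootSym := by
        intro x hx
        refine complete_localOK hrhs x (hts x hx) ?_
        intro s' u hxeq
        refine hrhs _ hp s' ?_
        subst hxeq
        simpa [Tree.rootSym] using List.mem_map_of_mem (f := Tree.rootSym) hx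
      obtain ⟨ts', hf⟩ := choose_forall₂ hchoice
      have hmap : ts'.map Tree.rootSym = ts.map Tree.rootSym :=
        map_eq_of_forall₂ hf fun a b h => h.2.2
      refine ⟨.node s a ts', Gen.node (by rw [hmap]; exact hp) ?_, .node (hf.imp fun _ _ h => h.2.1), rfl⟩
      intro y hy
      obtain ⟨x, -, hxy⟩ := forall₂_mem_right hf y hy
      exact hxy.1
termination_by t => sizeOf t
decreasing_by
  all_goals simp_wf
  all_goals try subst_vars
  all_goals (have := List.sizeOf_lt_of_mem hx)
  all_goals try simp only [Tree.node.sizeOf_spec] at *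
  all_goals omega

theorem triple_aux {G' : PreGMWf α} :
    ∀ {ts us ts' : List (Tree α)}, List.Forall₂ TPrefix ts us →
      List.Forall₂ (Develop G') ts ts' → (∀ u ∈ us, Gen G' u) →
      (∀ x ∈ ts, ∀ t0 tmaj, Gen G' t0 → TPrefix x t0 → Develop G' x tmaj →
        ∃ tb, Gen G' tb ∧ tb.rootSym = t0.rootSym ∧ TPrefix tmaj tb) →
      ∃ tbs, List.Forall₂ (fun a b => Gen G' b ∧ TPrefix a b) ts' tbs ∧
        tbs.map Tree.rootSym = us.map Tree.rootSym := by
  intro ts us ts' h1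
  induction h1 generalizing ts' with
  | nil => intro h2 _ _; cases h2; exact ⟨[], .nil, rfl⟩
  | cons hr _ ih =>
      intro h2 hg hIH
      cases h2 with
      | cons hd hds =>
          obtain ⟨tb, hgb, hrb, hpb⟩ := hIH _ (by simp) _ _ (hg _ (by simp)) hr hd
          obtain ⟨tbs, hf, hm⟩ := ih hds (fun u hu => hg u (by simp [hu]))
            (fun x hx => hIH x (by simp [hx]))
          exact ⟨tb :: tbs, .cons ⟨hgb, hpb⟩ hf, by simp [hm, hrb]⟩

theorem main_aux {G' : PreGMWf α}
    (hrhs : ∀ p ∈ G'.prods, ∀ s ∈ p.rhs, ∃ tb, Gen G' tb ∧ tb.rootSym = s) :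
    ∀ (tV t0 tmaj : Tree α), Gen G' t0 → TPrefix tV t0 → Develop G' tV tmaj →
      ∃ tb, Gen G' tb ∧ tb.rootSym = t0.rootSym ∧ TPrefix tmaj tb := by
  intro tV t0 tmaj h0 hpre hdev
  cases hdev with
  | bud_keep =>
      cases hpre with
      | bud h => exact ⟨t0, h0, rfl, .bud h⟩
  | @bud_dev s _ hroot hok =>
      cases hpre with
      | bud h0root =>
          have hbudc : ∀ (s' : Sym α) (u : Bool), tmaj = Tree.bud s' u →
              ∃ tb, Gen G' tb ∧ tb.rootSym = s' := by
            intro s' u hteq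
            refine ⟨t0, h0, ?_⟩
            rw [h0root, ← hroot, hteq]; rfl
          obtain ⟨tb, hg, hpfx, hr⟩ := complete_localOK hrhs tmaj hok hbudc
          exact ⟨tb, hg, by rw [hr, hroot, ← h0root], hpfx⟩
  | @node s a ts ts' hdevf =>
      cases hpre with
      | @node _ _ _ us hf =>
          cases h0 with
          | node hprod hus =>
              obtain ⟨tbs, hfb, hm⟩ := triple_aux hf hdevf hus
                (fun x hx t0 tmaj hg hp hd => main_aux hrhs x t0 tmaj hg hp hd)
              refine ⟨.node s a tbs, Gen.node (by rw [hm]; exact hprod) ?_, rfl,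
                .node (hfb.imp fun _ _ h => h.2)⟩
              intro y hy
              obtain ⟨x, -, hxy⟩ := forall₂_mem_right hfb y hy
              exact hxy.1
termination_by tV _ _ => sizeOf tV
decreasing_by
  all_goals simp_wf
  all_goals try subst_vars
  all_goals (have := List.sizeOf_lt_of_mem hx)
  all_goals try simp only [Tree.node.sizeOf_spec] at *
  all_goals omega

/-- Every right-hand-side symbol of a production of the projected GMWf is
productive in the projected GMWf. -/
theorem projG_rhs_productive {V : Set (Sym α)} {G : PreGMWf α} :
    ∀ p ∈ (projG V G).prods, ∀ s ∈ p.rhs,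
      ∃ tb, Gen (projG V G) tb ∧ tb.rootSym = s := by
  intro p hp s hs
  obtain ⟨t', ht', hpt⟩ := hp
  obtain ⟨t, hta, hproj⟩ := ht'
  have hb : BudFree t' := budfree_proj t (gen_budfree t hta.2) t' hproj
  have hgen' : Gen (projG V G) t' :=
    gen_of_budfree t' hb fun q hq => ⟨t', ⟨t, hta, hproj⟩, hq⟩
  exact gen_subtree t' hgen' s (rhs_mem_treeSyms t' p hpt s hs)

end Aux2

/-- Let `G' = Π_V(G)` for a GMWf `G` satisfying the
axioms' visibility (every axiom belongs to `V`) and non-recursivity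
assumptions, let `tV` be a prefix of at least one local target artifact of
`G'`, and let `tVmaj` be obtained from `tV` by developing some of its
unlocked buds in accordance with the productions of `G'`.  Then
`tV ≤ tVmaj`, and the set of local target artifacts of `G'` admitting
`tVmaj` as a prefix is a nonempty subset of those admitting `tV` as a
prefix. -/
theorem developed_replica_still_prefix {α : Type} (G : PreGMWf α)
    (V : Set (Sym α)) (hG : IsGMWf G) (hV : V ⊆ G.symbols)
    (hVis : G.axioms ⊆ V) (hNR : NonRecursive G)
    (tV : Tree α) (htV : ∃ ta ∈ arts (projG V G), TPrefix tV ta)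
    (tVmaj : Tree α) (hdev : Develop (projG V G) tV tVmaj) :
    TPrefix tV tVmaj ∧
    {ta ∈ arts (projG V G) | TPrefix tVmaj ta}.Nonempty ∧
    {ta ∈ arts (projG V G) | TPrefix tVmaj ta} ⊆
      {ta ∈ arts (projG V G) | TPrefix tV ta} := by
  have hrhs := projG_rhs_productive (V := V) (G := G)
  have h1 : TPrefix tV tVmaj := develop_tprefix tV tVmaj hdev
  obtain ⟨ta, hta, hpre⟩ := htV
  obtain ⟨tb, hgb, hrb, hpb⟩ := main_aux hrhs tV ta tVmaj hta.2 hpre hdev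
  have htb : tb ∈ arts (projG V G) := ⟨by rw [hrb]; exact hta.1, hgb⟩
  refine ⟨h1, ⟨tb, ⟨htb, hpb⟩⟩, ?_⟩
  intro x hx
  exact ⟨hx.1, tprefix_trans tV tVmaj x h1 hx.2⟩


end LSAWfP
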